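/- Let D be a nonempty measurable space, let η ≥ 0, let P be a probability measure on D, let ℓ : D × D → ℝ be jointly measurable, let γ ∈ ℝ, let ρ be a Markov kernel from D to D, and let ν be a probability measure on D such that for every z ∈ D and every measurable set E ⊆ D, (ρ(z))(E) ≤ ν(E) + η. Then ∫_D ρ(z)({ẑ ∈ D : ℓ(z,ẑ) ≤ γ}) dP(z) − sup_{ẑ ∈ D} P({z ∈ D : ℓ(z,ẑ) ≤ γ}) ≤ η. -/

import Mathlib

open MeasureTheory ProbabilityTheory

/-- SRR bullet of Theorem 5: `η`-TV privacy bounds the strong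
reconstruction-robustness advantage by `η`. -/
theorem stmt_9 {D : Type*} [MeasurableSpace D] [Nonempty D]
    (η : ℝ) (hη : 0 ≤ η)
    (P : Measure D) [IsProbabilityMeasure P]
    (ℓ : D → D → ℝ) (hℓ : Measurable (Function.uncurry ℓ)) (γ : ℝ)
    (ρ : Kernel D D) [IsMarkovKernel ρ]
    (ν : Measure D) [IsProbabilityMeasure ν]
    (hTV : ∀ z : D, ∀ E : Set D, MeasurableSet E → (ρ z) E ≤ ν E + ENNReal.ofReal η) :
    (∫ z, ((ρ z) {zhat : D | ℓ z zhat ≤ γ}).toReal ∂P) -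
      (⨆ zhat : D, (P {z : D | ℓ z zhat ≤ γ}).toReal) ≤ η := by
  set s : Set (D × D) := {p | ℓ p.1 p.2 ≤ γ} with hs_def
  have hs : MeasurableSet s := measurableSet_le hℓ measurable_const
  have hslice : ∀ z, MeasurableSet {zhat : D | ℓ z zhat ≤ γ} := fun z =>
    measurable_prodMk_left hs
  -- measurability of z ↦ ρ z (slice)
  have hmeas : Measurable fun z => (ρ z) {zhat : D | ℓ z zhat ≤ γ} := by
    have := Kernel.measurable_kernel_prodMk_left (κ := ρ) hs
    exact this
  -- Bochner integral equals toReal of lintegral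
  have hint : (∫ z, ((ρ z) {zhat : D | ℓ z zhat ≤ γ}).toReal ∂P)
      = (∫⁻ z, (ρ z) {zhat : D | ℓ z zhat ≤ γ} ∂P).toReal := by
    refine integral_toReal hmeas.aemeasurable ?_
    exact Filter.Eventually.of_forall fun z => measure_lt_top _ _
  -- step 1: TV bound
  have h1 : (∫⁻ z, (ρ z) {zhat : D | ℓ z zhat ≤ γ} ∂P)
      ≤ (∫⁻ z, ν {zhat : D | ℓ z zhat ≤ γ} ∂P) + ENNReal.ofReal η := by
    calc (∫⁻ z, (ρ z) {zhat : D | ℓ z zhat ≤ γ} ∂P)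
        ≤ ∫⁻ z, (ν {zhat : D | ℓ z zhat ≤ γ} + ENNReal.ofReal η) ∂P :=
          lintegral_mono fun z => hTV z _ (hslice z)
      _ = (∫⁻ z, ν {zhat : D | ℓ z zhat ≤ γ} ∂P) + ENNReal.ofReal η := by
          rw [lintegral_add_right _ measurable_const, lintegral_const,
            measure_univ, mul_one]
  -- step 2: Fubini
  have h2 : (∫⁻ z, ν {zhat : D | ℓ z zhat ≤ γ} ∂P)
      = ∫⁻ zhat, P {z : D | ℓ z zhat ≤ γ} ∂ν := by
    have e1 : (∫⁻ z, ν (Prod.mk z ⁻¹' s) ∂P) = (P.prod ν) s :=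
      (Measure.prod_apply hs).symm
    have e2 : (P.prod ν) s = ∫⁻ y, P ((fun x => (x, y)) ⁻¹' s) ∂ν :=
      Measure.prod_apply_symm hs
    exact e1.trans e2
  -- step 3: bound by sup
  have h3 : (∫⁻ zhat, P {z : D | ℓ z zhat ≤ γ} ∂ν)
      ≤ ⨆ zhat : D, P {z : D | ℓ z zhat ≤ γ} := by
    calc (∫⁻ zhat, P {z : D | ℓ z zhat ≤ γ} ∂ν)
        ≤ ∫⁻ _, (⨆ zhat : D, P {z : D | ℓ z zhat ≤ γ}) ∂ν :=
          lintegral_mono fun zhat => le_iSup (fun zhat => P {z : D | ℓ z zhat ≤ γ}) zhat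
      _ = ⨆ zhat : D, P {z : D | ℓ z zhat ≤ γ} := by
          rw [lintegral_const, measure_univ, mul_one]
  have hsup_ne : (⨆ zhat : D, P {z : D | ℓ z zhat ≤ γ}) ≠ ⊤ := by
    exact ne_top_of_le_ne_top ENNReal.one_ne_top (iSup_le fun _ => prob_le_one)
  have hsup_toReal : (⨆ zhat : D, P {z : D | ℓ z zhat ≤ γ}).toReal
      = ⨆ zhat : D, (P {z : D | ℓ z zhat ≤ γ}).toReal :=
    ENNReal.toReal_iSup fun _ => measure_ne_top _ _
  have hle : (∫⁻ z, (ρ z) {zhat : D | ℓ z zhat ≤ γ} ∂P)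
      ≤ (⨆ zhat : D, P {z : D | ℓ z zhat ≤ γ}) + ENNReal.ofReal η := by
    refine h1.trans (add_le_add_left ?_ _)
    rw [h2]; exact h3
  have hfin : ((⨆ zhat : D, P {z : D | ℓ z zhat ≤ γ}) + ENNReal.ofReal η) ≠ ⊤ :=
    ENNReal.add_ne_top.2 ⟨hsup_ne, ENNReal.ofReal_ne_top⟩
  have := ENNReal.toReal_mono hfin hle
  rw [ENNReal.toReal_add hsup_ne ENNReal.ofReal_ne_top, ENNReal.toReal_ofReal hη,
    hsup_toReal] at this
  rw [hint]
  linarith
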